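/- Let G and H be finite simple graphs, let A₁, A₂, …, A_t be a greedy independent decomposition of G, let B₁, B₂, …, B_s be a greedy independent decomposition of H, and set p = min{s, t}. Then the set (A₁ × B₁) ∪ (A₂ × B₂) ∪ ⋯ ∪ (A_p × B_p) is a maximal independent set in the Cartesian product G □ H. -/

import Mathlib

/-- A set of vertices is independent if no two of its vertices are adjacent. -/
def IsIndep {V : Type*} (G : SimpleGraph V) (s : Set V) : Prop :=
  ∀ ⦃u⦄, u ∈ s → ∀ ⦃v⦄, v ∈ s → ¬ G.Adj u v

/-- A maximal independent set: independent and contained in no strictly larger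
independent set. -/
def MaxIndep {V : Type*} (G : SimpleGraph V) (s : Set V) : Prop :=
  IsIndep G s ∧ ∀ t : Set V, IsIndep G t → s ⊆ t → s = t

/-- A maximal independent set of the subgraph induced on `A`. -/
def MaxIndepOn {V : Type*} (G : SimpleGraph V) (A : Set V) (s : Set V) : Prop :=
  s ⊆ A ∧ IsIndep G s ∧ ∀ t : Set V, t ⊆ A → IsIndep G t → s ⊆ t → s = t

/-- A graph is well-covered if every maximal independent set has the same cardinality. -/
def WellCovered {V : Type*} (G : SimpleGraph V) : Prop :=
  ∀ s t : Set V, MaxIndep G s → MaxIndep G t → s.ncard = t.ncard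

/-- The closed neighborhood `N[S]`: the union of `S` with the set of all vertices
adjacent to some vertex of `S`. -/
def ClosedNbhd {V : Type*} (G : SimpleGraph V) (S : Set V) : Set V :=
  S ∪ {v | ∃ u ∈ S, G.Adj u v}

/-- A vertex `x` is isolatable if there is an independent set `M` such that `x` is the
unique vertex lying outside `N[M]`. -/
def Isolatable {V : Type*} (G : SimpleGraph V) (x : V) : Prop :=
  ∃ M : Set V, IsIndep G M ∧ (ClosedNbhd G M)ᶜ = {x}

/-- A greedy independent decomposition of `G`: a partition `A 0, …, A (t-1)` of the
vertex set such that each `A i` is a maximal independent set of the subgraph induced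
by the vertices outside `A 0 ∪ ⋯ ∪ A (i-1)`. -/
def GreedyDecomp {V : Type*} (G : SimpleGraph V) (t : ℕ) (A : ℕ → Set V) : Prop :=
  (⋃ i < t, A i) = Set.univ ∧
  (∀ i < t, (A i).Nonempty) ∧
  (∀ i < t, ∀ j < t, i ≠ j → Disjoint (A i) (A j)) ∧
  (∀ i < t, MaxIndepOn G (⋃ j < i, A j)ᶜ (A i))

lemma maxIndepOn_neighbor {V : Type*} {G : SimpleGraph V} {A s : Set V}
    (h : MaxIndepOn G A s) {x : V} (hx : x ∈ A) (hxs : x ∉ s) :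
    ∃ u ∈ s, G.Adj u x := by
  obtain ⟨hsub, hind, hm⟩ := h
  by_contra hc
  push_neg at hc
  have hind' : IsIndep G (s ∪ {x}) := by
    intro u hu v hv hadj
    rcases hu with hu | hu <;> rcases hv with hv | hv
    · exact hind hu hv hadj
    · rw [Set.mem_singleton_iff] at hv; subst hv; exact hc u hu hadj
    · rw [Set.mem_singleton_iff] at hu; subst hu; exact hc v hv hadj.symm
    · rw [Set.mem_singleton_iff] at hu hv; subst hu; subst hv; exact G.loopless.irrefl _ hadj
  have hsub' : s ∪ {x} ⊆ A := by
    intro v hv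
    rcases hv with hv | hv
    · exact hsub hv
    · rw [Set.mem_singleton_iff] at hv; subst hv; exact hx
  have := hm _ hsub' hind' Set.subset_union_left
  exact hxs (this ▸ Set.mem_union_right _ rfl)

/-- The diagonal set built from greedy independent decompositions of `G` and `H` is a
maximal independent set of `G □ H`. -/
theorem stmt_8 {V W : Type*} [Fintype V] [Fintype W]
    (G : SimpleGraph V) (H : SimpleGraph W)
    (t s : ℕ) (A : ℕ → Set V) (B : ℕ → Set W)
    (hA : GreedyDecomp G t A) (hB : GreedyDecomp H s B) :
    MaxIndep (G.boxProd H) (⋃ i < min s t, (A i) ×ˢ (B i)) := by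
  obtain ⟨hAcov, -, hAdisj, hAmax⟩ := hA
  obtain ⟨hBcov, -, hBdisj, hBmax⟩ := hB
  set p := min s t with hp
  have memD : ∀ z : V × W, z ∈ (⋃ i < p, (A i) ×ˢ (B i)) ↔
      ∃ i < p, z.1 ∈ A i ∧ z.2 ∈ B i := by
    intro z
    simp only [Set.mem_iUnion, Set.mem_prod]
    tauto
  constructor
  · -- independence
    intro u hu v hv hadj
    rw [memD] at hu hv
    obtain ⟨i, hip, hu1, hu2⟩ := hu
    obtain ⟨j, hjp, hv1, hv2⟩ := hv
    rcases SimpleGraph.boxProd_adj.mp hadj with ⟨hG, he⟩ | ⟨hH, he⟩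
    · rcases eq_or_ne i j with rfl | hij
      · exact (hAmax i (hip.trans_le (min_le_right s t))).2.1 hu1 hv1 hG
      · have := hBdisj i (hip.trans_le (min_le_left s t)) j (hjp.trans_le (min_le_left s t)) hij
        exact this.ne_of_mem hu2 hv2 he
    · rcases eq_or_ne i j with rfl | hij
      · exact (hBmax i (hip.trans_le (min_le_left s t))).2.1 hu2 hv2 hH
      · have := hAdisj i (hip.trans_le (min_le_right s t)) j (hjp.trans_le (min_le_right s t)) hij
        exact this.ne_of_mem hu1 hv1 he
  · -- maximality
    intro T hT hsubT
    refine Set.Subset.antisymm hsubT ?_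
    intro z hzT
    by_contra hzD
    obtain ⟨x, y⟩ := z
    -- x ∈ A i for some i < t
    have hxV : (x : V) ∈ ⋃ i < t, A i := hAcov ▸ Set.mem_univ x
    have hyW : (y : W) ∈ ⋃ i < s, B i := hBcov ▸ Set.mem_univ y
    simp only [Set.mem_iUnion] at hxV hyW
    obtain ⟨i, hit, hxi⟩ := hxV
    obtain ⟨j, hjs, hyj⟩ := hyW
    have hij : i ≠ j := by
      rintro rfl
      exact hzD ((memD (x, y)).mpr ⟨i, lt_min hjs hit, hxi, hyj⟩)
    -- find a neighbor of (x,y) in D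
    have key : ∃ w ∈ (⋃ i < p, (A i) ×ˢ (B i)), (G.boxProd H).Adj w (x, y) := by
      rcases lt_or_gt_of_ne hij with hlt | hlt
      · -- i < j : y ∈ complement of earlier B's up to i, y ∉ B i, get H-neighbor in B i
        have hip : i < p := lt_min (hlt.trans_le (Nat.lt_succ_iff.mp (Nat.lt_succ_of_lt hjs))) hit
        have hyA : y ∈ (⋃ k < i, B k)ᶜ := by
          simp only [Set.mem_compl_iff, Set.mem_iUnion]
          rintro ⟨k, hki, hyk⟩
          exact (hBdisj j hjs k (by omega) (by omega)).ne_of_mem hyj hyk rfl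
        have hyni : y ∉ B i := by
          intro hy
          exact (hBdisj i (hip.trans_le (min_le_left s t)) j hjs (by omega)).ne_of_mem hy hyj rfl
        obtain ⟨y', hy', hadj⟩ := maxIndepOn_neighbor (hBmax i (hip.trans_le (min_le_left s t))) hyA hyni
        exact ⟨(x, y'), (memD (x, y')).mpr ⟨i, hip, hxi, hy'⟩,
          SimpleGraph.boxProd_adj.mpr (Or.inr ⟨hadj, rfl⟩)⟩
      · -- j < i : x gets G-neighbor in A j
        have hjp : j < p := lt_min hjs (hlt.trans hit)
        have hxA : x ∈ (⋃ k < j, A k)ᶜ := by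
          simp only [Set.mem_compl_iff, Set.mem_iUnion]
          rintro ⟨k, hkj, hxk⟩
          exact (hAdisj i hit k (by omega) (by omega)).ne_of_mem hxi hxk rfl
        have hxnj : x ∉ A j := by
          intro hx
          exact (hAdisj j (hjp.trans_le (min_le_right s t)) i hit (by omega)).ne_of_mem hx hxi rfl
        obtain ⟨x', hx', hadj⟩ := maxIndepOn_neighbor (hAmax j (hjp.trans_le (min_le_right s t))) hxA hxnj
        exact ⟨(x', y), (memD (x', y)).mpr ⟨j, hjp, hx', hyj⟩,
          SimpleGraph.boxProd_adj.mpr (Or.inl ⟨hadj, rfl⟩)⟩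
    obtain ⟨w, hwD, hadj⟩ := key
    exact hT (hsubT hwD) hzT hadj
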